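/- For n = 2 agents with independent values on a common finite support V ⊂ ℝ \ {0}, the maximum expected welfare over all anonymous BIC social choice functions is attained by either the qualified majority rule f^(1) (reform iff at least one agent has positive value) or f^(2) (reform iff both agents have positive values). -/

import Mathlib

open Finset

/-- Interim reform probability for agent 1 reporting `x` (two agents). -/
noncomputable def interim1 (V : Finset ℝ) (G2 : ℝ → ℝ) (f : ℝ → ℝ → ℝ) (x : ℝ) : ℝ :=
  ∑ y ∈ V, G2 y * f x y

/-- Interim reform probability for agent 2 reporting `y` (two agents). -/
noncomputable def interim2 (V : Finset ℝ) (G1 : ℝ → ℝ) (f : ℝ → ℝ → ℝ) (y : ℝ) : ℝ :=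
  ∑ x ∈ V, G1 x * f x y

/-- BIC for two agents. -/
def BIC2 (V : Finset ℝ) (G1 G2 : ℝ → ℝ) (f : ℝ → ℝ → ℝ) : Prop :=
  (∀ x ∈ V, ∀ x' ∈ V, x * interim1 V G2 f x' ≤ x * interim1 V G2 f x) ∧
  (∀ y ∈ V, ∀ y' ∈ V, y * interim2 V G1 f y' ≤ y * interim2 V G1 f y)

/-- Expected welfare with two agents. -/
noncomputable def welfare2 (V : Finset ℝ) (G1 G2 : ℝ → ℝ) (f : ℝ → ℝ → ℝ) : ℝ :=
  ∑ x ∈ V, ∑ y ∈ V, G1 x * G2 y * (f x y * (x + y))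

/-- Qualified majority rule `f⁽¹⁾`: reform iff at least one positive value. -/
noncomputable def qmr1 (x y : ℝ) : ℝ := if 0 < x ∨ 0 < y then 1 else 0

/-- Qualified majority rule `f⁽²⁾`: reform iff both values positive. -/
noncomputable def qmr2 (x y : ℝ) : ℝ := if 0 < x ∧ 0 < y then 1 else 0

lemma sum_split (V : Finset ℝ) (hV0 : (0:ℝ) ∉ V) (h : ℝ → ℝ) :
    ∑ x ∈ V, h x = ∑ x ∈ V.filter (fun a => 0 < a), h x
      + ∑ x ∈ V.filter (fun a => a < 0), h x := by
  rw [← Finset.sum_filter_add_sum_filter_not V (fun a => 0 < a) h]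
  congr 1
  apply Finset.sum_congr _ (fun _ _ => rfl)
  ext a
  simp only [Finset.mem_filter, not_lt]
  constructor
  · rintro ⟨ha, ha2⟩
    exact ⟨ha, lt_of_le_of_ne ha2 (fun h0 => hV0 (h0 ▸ ha))⟩
  · rintro ⟨ha, ha2⟩; exact ⟨ha, ha2.le⟩

lemma region_sum (S T : Finset ℝ) (c d : ℝ → ℝ) :
    ∑ x ∈ S, ∑ y ∈ T, c x * d y * (x + y)
      = (∑ x ∈ S, c x * x) * (∑ y ∈ T, d y) + (∑ x ∈ S, c x) * (∑ y ∈ T, d y * y) := by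
  rw [Finset.sum_mul_sum, Finset.sum_mul_sum, ← Finset.sum_add_distrib]
  apply Finset.sum_congr rfl; intro x _
  rw [← Finset.sum_add_distrib]
  apply Finset.sum_congr rfl; intro y _
  ring

lemma master (V : Finset ℝ) (hV0 : (0 : ℝ) ∉ V)
    (G1 G2 : ℝ → ℝ)
    (hG1 : (∀ x, 0 ≤ G1 x) ∧ ∑ x ∈ V, G1 x = 1)
    (hG2 : (∀ x, 0 ≤ G2 x) ∧ ∑ x ∈ V, G2 x = 1)
    (hm1 : (∃ x ∈ V, 0 < x ∧ 0 < G1 x) ∧ (∃ x ∈ V, x < 0 ∧ 0 < G1 x))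
    (hm2 : (∃ x ∈ V, 0 < x ∧ 0 < G2 x) ∧ (∃ x ∈ V, x < 0 ∧ 0 < G2 x))
    (f : ℝ → ℝ → ℝ) (h01 : ∀ x y, 0 ≤ f x y ∧ f x y ≤ 1)
    (hsym : ∀ x y, f x y = f y x) (hBIC : BIC2 V G1 G2 f) :
    welfare2 V G1 G2 f ≤ max (welfare2 V G1 G2 qmr1) (welfare2 V G1 G2 qmr2) := by
  obtain ⟨⟨p1, hp1V, hp1, hp1G⟩, ⟨n1, hn1V, hn1, hn1G⟩⟩ := hm1
  obtain ⟨⟨p2, hp2V, hp2, hp2G⟩, ⟨n2, hn2V, hn2, hn2G⟩⟩ := hm2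
  set Vp := V.filter (fun a => 0 < a) with hVpdef
  set Vn := V.filter (fun a => a < 0) with hVndef
  have hp1p : p1 ∈ Vp := Finset.mem_filter.mpr ⟨hp1V, hp1⟩
  have hn1n : n1 ∈ Vn := Finset.mem_filter.mpr ⟨hn1V, hn1⟩
  have hp2p : p2 ∈ Vp := Finset.mem_filter.mpr ⟨hp2V, hp2⟩
  have hn2n : n2 ∈ Vn := Finset.mem_filter.mpr ⟨hn2V, hn2⟩
  have hVpV : ∀ x ∈ Vp, x ∈ V := fun x hx => (Finset.mem_filter.mp hx).1
  have hVnV : ∀ x ∈ Vn, x ∈ V := fun x hx => (Finset.mem_filter.mp hx).1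
  have hVpPos : ∀ x ∈ Vp, 0 < x := fun x hx => (Finset.mem_filter.mp hx).2
  have hVnNeg : ∀ x ∈ Vn, x < 0 := fun x hx => (Finset.mem_filter.mp hx).2
  -- interim values
  set Ap := interim1 V G2 f p1 with hApdef
  set Am := interim1 V G2 f n1 with hAmdef
  set Bp := interim2 V G1 f p2 with hBpdef
  set Bm := interim2 V G1 f n2 with hBmdef
  have hA_pos : ∀ x ∈ Vp, interim1 V G2 f x = Ap := by
    intro x hx
    have hxV := hVpV x hx; have hx0 := hVpPos x hx
    have h1 := hBIC.1 x hxV p1 hp1V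
    have h2 := hBIC.1 p1 hp1V x hxV
    have l1 : interim1 V G2 f p1 ≤ interim1 V G2 f x := (mul_le_mul_iff_right₀ hx0).mp h1
    have l2 : interim1 V G2 f x ≤ interim1 V G2 f p1 := (mul_le_mul_iff_right₀ hp1).mp h2
    exact le_antisymm l2 l1
  have hA_neg : ∀ x ∈ Vn, interim1 V G2 f x = Am := by
    intro x hx
    have hxV := hVnV x hx; have hx0 := hVnNeg x hx
    have h1 := hBIC.1 x hxV n1 hn1V
    have h2 := hBIC.1 n1 hn1V x hxV
    exact le_antisymm ((mul_le_mul_left_of_neg hx0).mp h1) ((mul_le_mul_left_of_neg hn1).mp h2)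
  have hB_pos : ∀ y ∈ Vp, interim2 V G1 f y = Bp := by
    intro y hy
    have hyV := hVpV y hy; have hy0 := hVpPos y hy
    have h1 := hBIC.2 y hyV p2 hp2V
    have h2 := hBIC.2 p2 hp2V y hyV
    exact le_antisymm ((mul_le_mul_iff_right₀ hp2).mp h2) ((mul_le_mul_iff_right₀ hy0).mp h1)
  have hB_neg : ∀ y ∈ Vn, interim2 V G1 f y = Bm := by
    intro y hy
    have hyV := hVnV y hy; have hy0 := hVnNeg y hy
    have h1 := hBIC.2 y hyV n2 hn2V
    have h2 := hBIC.2 n2 hn2V y hyV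
    exact le_antisymm ((mul_le_mul_left_of_neg hy0).mp h1) ((mul_le_mul_left_of_neg hn2).mp h2)
  -- basic bounds on interim values
  have hAm0 : 0 ≤ Am := by
    rw [hAmdef, interim1]
    exact Finset.sum_nonneg fun y _ => mul_nonneg (hG2.1 y) (h01 n1 y).1
  have hBm0 : 0 ≤ Bm := by
    rw [hBmdef, interim2]
    exact Finset.sum_nonneg fun x _ => mul_nonneg (hG1.1 x) (h01 x n2).1
  have hAp1 : Ap ≤ 1 := by
    rw [hApdef, interim1, ← hG2.2]
    exact Finset.sum_le_sum fun y _ => mul_le_of_le_one_right (hG2.1 y) (h01 p1 y).2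
  have hBp1 : Bp ≤ 1 := by
    rw [hBpdef, interim2, ← hG1.2]
    exact Finset.sum_le_sum fun x _ => mul_le_of_le_one_right (hG1.1 x) (h01 x p2).2
  -- scalar masses and moments
  set g1p := ∑ x ∈ Vp, G1 x with hg1p
  set g1n := ∑ x ∈ Vn, G1 x with hg1n
  set g2p := ∑ x ∈ Vp, G2 x with hg2p
  set g2n := ∑ x ∈ Vn, G2 x with hg2n
  have hg1sum : g1p + g1n = 1 := by rw [hg1p, hg1n, ← sum_split V hV0 G1]; exact hG1.2
  have hg2sum : g2p + g2n = 1 := by rw [hg2p, hg2n, ← sum_split V hV0 G2]; exact hG2.2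
  have hg1p_pos : 0 < g1p :=
    lt_of_lt_of_le hp1G (Finset.single_le_sum (fun i _ => hG1.1 i) hp1p)
  have hg1n_pos : 0 < g1n :=
    lt_of_lt_of_le hn1G (Finset.single_le_sum (fun i _ => hG1.1 i) hn1n)
  have hg2p_pos : 0 < g2p :=
    lt_of_lt_of_le hp2G (Finset.single_le_sum (fun i _ => hG2.1 i) hp2p)
  have hg2n_pos : 0 < g2n :=
    lt_of_lt_of_le hn2G (Finset.single_le_sum (fun i _ => hG2.1 i) hn2n)
  set P1 := ∑ x ∈ Vp, G1 x * x with hP1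
  set N1 := ∑ x ∈ Vn, G1 x * x with hN1
  set P2 := ∑ x ∈ Vp, G2 x * x with hP2
  set N2 := ∑ x ∈ Vn, G2 x * x with hN2
  have hP1_nn : 0 ≤ P1 :=
    Finset.sum_nonneg fun x hx => mul_nonneg (hG1.1 x) (hVpPos x hx).le
  have hP2_nn : 0 ≤ P2 :=
    Finset.sum_nonneg fun x hx => mul_nonneg (hG2.1 x) (hVpPos x hx).le
  have hN1_np : N1 ≤ 0 :=
    Finset.sum_nonpos fun x hx => mul_nonpos_of_nonneg_of_nonpos (hG1.1 x) (hVnNeg x hx).le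
  have hN2_np : N2 ≤ 0 :=
    Finset.sum_nonpos fun x hx => mul_nonpos_of_nonneg_of_nonpos (hG2.1 x) (hVnNeg x hx).le
  -- weighted interim sums over regions
  have wsum1 : ∀ (c : ℝ → ℝ) (S : Finset ℝ),
      ∑ x ∈ S, c x * interim1 V G2 f x
        = ∑ x ∈ S, ∑ y ∈ Vp, c x * (G2 y * f x y)
          + ∑ x ∈ S, ∑ y ∈ Vn, c x * (G2 y * f x y) := by
    intro c S
    rw [← Finset.sum_add_distrib]
    apply Finset.sum_congr rfl
    intro x _
    rw [interim1, sum_split V hV0 (fun y => G2 y * f x y), mul_add,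
      Finset.mul_sum, Finset.mul_sum]
  have wsum2 : ∀ (c : ℝ → ℝ) (S : Finset ℝ),
      ∑ y ∈ S, c y * interim2 V G1 f y
        = ∑ y ∈ S, ∑ x ∈ Vp, c y * (G1 x * f x y)
          + ∑ y ∈ S, ∑ x ∈ Vn, c y * (G1 x * f x y) := by
    intro c S
    rw [← Finset.sum_add_distrib]
    apply Finset.sum_congr rfl
    intro y _
    rw [interim2, sum_split V hV0 (fun x => G1 x * f x y), mul_add,
      Finset.mul_sum, Finset.mul_sum]
  have collapse1 : ∀ (c : ℝ → ℝ) (S : Finset ℝ) (K : ℝ),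
      (∀ x ∈ S, interim1 V G2 f x = K) →
      ∑ x ∈ S, c x * interim1 V G2 f x = (∑ x ∈ S, c x) * K := by
    intro c S K hK
    rw [Finset.sum_mul]
    exact Finset.sum_congr rfl fun x hx => by rw [hK x hx]
  have collapse2 : ∀ (c : ℝ → ℝ) (S : Finset ℝ) (K : ℝ),
      (∀ y ∈ S, interim2 V G1 f y = K) →
      ∑ y ∈ S, c y * interim2 V G1 f y = (∑ y ∈ S, c y) * K := by
    intro c S K hK
    rw [Finset.sum_mul]
    exact Finset.sum_congr rfl fun y hy => by rw [hK y hy]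
  -- generic bounds for double sums
  have dnn : ∀ (c d : ℝ → ℝ) (S T : Finset ℝ), (∀ x, 0 ≤ c x) → (∀ x, 0 ≤ d x) →
      0 ≤ ∑ x ∈ S, ∑ y ∈ T, c x * (d y * f x y) := by
    intro c d S T hc hd
    exact Finset.sum_nonneg fun x _ => Finset.sum_nonneg fun y _ =>
      mul_nonneg (hc x) (mul_nonneg (hd y) (h01 x y).1)
  have dub : ∀ (c d : ℝ → ℝ) (S T : Finset ℝ), (∀ x, 0 ≤ c x) → (∀ x, 0 ≤ d x) →
      ∑ x ∈ S, ∑ y ∈ T, c x * (d y * f x y) ≤ (∑ x ∈ S, c x) * (∑ y ∈ T, d y) := by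
    intro c d S T hc hd
    rw [Finset.sum_mul_sum]
    apply Finset.sum_le_sum; intro x _
    apply Finset.sum_le_sum; intro y _
    calc c x * (d y * f x y) ≤ c x * (d y * 1) := by
            apply mul_le_mul_of_nonneg_left _ (hc x)
            exact mul_le_mul_of_nonneg_left (h01 x y).2 (hd y)
      _ = c x * d y := by ring
  -- symmetry swap for double sums with one weight function
  have dswap : ∀ (c : ℝ → ℝ),
      ∑ x ∈ Vn, ∑ y ∈ Vp, c x * (c y * f x y)
        = ∑ x ∈ Vp, ∑ y ∈ Vn, c x * (c y * f x y) := by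
    intro c
    rw [Finset.sum_comm]
    apply Finset.sum_congr rfl; intro x _
    apply Finset.sum_congr rfl; intro y _
    rw [hsym y x]; ring
  -- the five constraints
  -- C2 : g2p * Ap - g2p * g2p ≤ g2n * Am
  have hC2 : g2p * Ap - g2p * g2p ≤ g2n * Am := by
    have e1 : g2p * Ap = ∑ x ∈ Vp, ∑ y ∈ Vp, G2 x * (G2 y * f x y)
        + ∑ x ∈ Vp, ∑ y ∈ Vn, G2 x * (G2 y * f x y) := by
      rw [← wsum1 G2 Vp, collapse1 G2 Vp Ap hA_pos]
    have e2 : g2n * Am = ∑ x ∈ Vn, ∑ y ∈ Vp, G2 x * (G2 y * f x y)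
        + ∑ x ∈ Vn, ∑ y ∈ Vn, G2 x * (G2 y * f x y) := by
      rw [← wsum1 G2 Vn, collapse1 G2 Vn Am hA_neg]
    rw [e1, e2, dswap G2]
    have b1 := dub G2 G2 Vp Vp hG2.1 hG2.1
    have b2 := dnn G2 G2 Vn Vn hG2.1 hG2.1
    rw [← hg2p] at b1
    linarith
  -- C3 : g1p * Bp - g1p * g1p ≤ g1n * Bm
  have hC3 : g1p * Bp - g1p * g1p ≤ g1n * Bm := by
    have e1 : g1p * Bp = ∑ y ∈ Vp, ∑ x ∈ Vp, G1 y * (G1 x * f x y)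
        + ∑ y ∈ Vp, ∑ x ∈ Vn, G1 y * (G1 x * f x y) := by
      rw [← wsum2 G1 Vp, collapse2 G1 Vp Bp hB_pos]
    have e2 : g1n * Bm = ∑ y ∈ Vn, ∑ x ∈ Vp, G1 y * (G1 x * f x y)
        + ∑ y ∈ Vn, ∑ x ∈ Vn, G1 y * (G1 x * f x y) := by
      rw [← wsum2 G1 Vn, collapse2 G1 Vn Bm hB_neg]
    -- convert to the dswap/dub/dnn shapes: c x * (c y * f x y) with x outer over first index
    have r1 : ∑ y ∈ Vp, ∑ x ∈ Vn, G1 y * (G1 x * f x y)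
        = ∑ x ∈ Vp, ∑ y ∈ Vn, G1 x * (G1 y * f x y) := by
      apply Finset.sum_congr rfl; intro y _
      apply Finset.sum_congr rfl; intro x _
      rw [hsym x y]
    have r2 : ∑ y ∈ Vn, ∑ x ∈ Vp, G1 y * (G1 x * f x y)
        = ∑ x ∈ Vn, ∑ y ∈ Vp, G1 x * (G1 y * f x y) := by
      apply Finset.sum_congr rfl; intro y _
      apply Finset.sum_congr rfl; intro x _
      rw [hsym x y]
    have r3 : ∑ y ∈ Vp, ∑ x ∈ Vp, G1 y * (G1 x * f x y)
        = ∑ x ∈ Vp, ∑ y ∈ Vp, G1 x * (G1 y * f x y) := by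
      rw [Finset.sum_comm]
      apply Finset.sum_congr rfl; intro x _
      apply Finset.sum_congr rfl; intro y _
      ring
    have r4 : ∑ y ∈ Vn, ∑ x ∈ Vn, G1 y * (G1 x * f x y)
        = ∑ x ∈ Vn, ∑ y ∈ Vn, G1 x * (G1 y * f x y) := by
      rw [Finset.sum_comm]
      apply Finset.sum_congr rfl; intro x _
      apply Finset.sum_congr rfl; intro y _
      ring
    rw [e1, e2, r1, r2, r3, r4, dswap G1]
    have b1 := dub G1 G1 Vp Vp hG1.1 hG1.1
    have b2 := dnn G1 G1 Vn Vn hG1.1 hG1.1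
    rw [← hg1p] at b1
    linarith
  -- cross constraints via G1 × G2
  have hSppA : g1p * Ap = ∑ x ∈ Vp, ∑ y ∈ Vp, G1 x * (G2 y * f x y)
      + ∑ x ∈ Vp, ∑ y ∈ Vn, G1 x * (G2 y * f x y) := by
    rw [← wsum1 G1 Vp, collapse1 G1 Vp Ap hA_pos]
  have hSnnA : g1n * Am = ∑ x ∈ Vn, ∑ y ∈ Vp, G1 x * (G2 y * f x y)
      + ∑ x ∈ Vn, ∑ y ∈ Vn, G1 x * (G2 y * f x y) := by
    rw [← wsum1 G1 Vn, collapse1 G1 Vn Am hA_neg]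
  have hSppB : g2p * Bp = ∑ x ∈ Vp, ∑ y ∈ Vp, G1 x * (G2 y * f x y)
      + ∑ x ∈ Vn, ∑ y ∈ Vp, G1 x * (G2 y * f x y) := by
    have e1 : g2p * Bp = ∑ y ∈ Vp, ∑ x ∈ Vp, G2 y * (G1 x * f x y)
        + ∑ y ∈ Vp, ∑ x ∈ Vn, G2 y * (G1 x * f x y) := by
      rw [← wsum2 G2 Vp, collapse2 G2 Vp Bp hB_pos]
    rw [e1, Finset.sum_comm (s := Vp) (t := Vp), Finset.sum_comm (s := Vp) (t := Vn)]
    congr 1 <;>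
      (apply Finset.sum_congr rfl; intro x _; apply Finset.sum_congr rfl; intro y _; ring)
  have hSnnB : g2n * Bm = ∑ x ∈ Vp, ∑ y ∈ Vn, G1 x * (G2 y * f x y)
      + ∑ x ∈ Vn, ∑ y ∈ Vn, G1 x * (G2 y * f x y) := by
    have e1 : g2n * Bm = ∑ y ∈ Vn, ∑ x ∈ Vp, G2 y * (G1 x * f x y)
        + ∑ y ∈ Vn, ∑ x ∈ Vn, G2 y * (G1 x * f x y) := by
      rw [← wsum2 G2 Vn, collapse2 G2 Vn Bm hB_neg]
    rw [e1, Finset.sum_comm (s := Vn) (t := Vp), Finset.sum_comm (s := Vn) (t := Vn)]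
    congr 1 <;>
      (apply Finset.sum_congr rfl; intro x _; apply Finset.sum_congr rfl; intro y _; ring)
  have bSpp := dub G1 G2 Vp Vp hG1.1 hG2.1
  rw [← hg1p, ← hg2p] at bSpp
  have bSnn := dnn G1 G2 Vn Vn hG1.1 hG2.1
  have hC4 : g1p * Ap - g1p * g2p ≤ g2n * Bm := by
    rw [hSppA, hSnnB]; linarith
  have hC5 : g2p * Bp - g1p * g2p ≤ g1n * Am := by
    rw [hSppB, hSnnA]; linarith
  -- welfare decomposition
  have hWf : welfare2 V G1 G2 f = P1 * Ap + N1 * Am + P2 * Bp + N2 * Bm := by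
    have e0 : welfare2 V G1 G2 f
        = ∑ x ∈ V, (G1 x * x) * interim1 V G2 f x
          + ∑ y ∈ V, (G2 y * y) * interim2 V G1 f y := by
      rw [welfare2]
      have e1 : ∀ x ∈ V, ∑ y ∈ V, G1 x * G2 y * (f x y * (x + y))
          = ∑ y ∈ V, ((G1 x * x) * (G2 y * f x y) + (G2 y * y) * (G1 x * f x y)) := by
        intro x _
        apply Finset.sum_congr rfl; intro y _; ring
      rw [Finset.sum_congr rfl e1]
      rw [Finset.sum_congr rfl
        (fun x _ => Finset.sum_add_distrib (s := V)
          (f := fun y => (G1 x * x) * (G2 y * f x y))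
          (g := fun y => (G2 y * y) * (G1 x * f x y)))]
      rw [Finset.sum_add_distrib]
      congr 1
      · apply Finset.sum_congr rfl; intro x _
        rw [interim1, Finset.mul_sum]
      · rw [Finset.sum_comm]
        apply Finset.sum_congr rfl; intro y _
        rw [interim2, Finset.mul_sum]
    rw [e0, sum_split V hV0 (fun x => (G1 x * x) * interim1 V G2 f x),
      sum_split V hV0 (fun y => (G2 y * y) * interim2 V G1 f y),
      collapse1 (fun x => G1 x * x) Vp Ap hA_pos,
      collapse1 (fun x => G1 x * x) Vn Am hA_neg,
      collapse2 (fun y => G2 y * y) Vp Bp hB_pos,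
      collapse2 (fun y => G2 y * y) Vn Bm hB_neg]
    ring
  -- welfare of the two qualified majority rules
  have hW1 : welfare2 V G1 G2 qmr1 = P1 + P2 + g2p * N1 + g1p * N2 := by
    rw [welfare2, sum_split V hV0 (fun x => ∑ y ∈ V, G1 x * G2 y * (qmr1 x y * (x + y)))]
    have ei : ∀ x, ∑ y ∈ V, G1 x * G2 y * (qmr1 x y * (x + y))
        = ∑ y ∈ Vp, G1 x * G2 y * (qmr1 x y * (x + y))
          + ∑ y ∈ Vn, G1 x * G2 y * (qmr1 x y * (x + y)) :=
      fun x => sum_split V hV0 _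
    rw [Finset.sum_congr rfl (fun x _ => ei x), Finset.sum_congr rfl (fun x _ => ei x),
      Finset.sum_add_distrib, Finset.sum_add_distrib]
    have q_pp : ∑ x ∈ Vp, ∑ y ∈ Vp, G1 x * G2 y * (qmr1 x y * (x + y))
        = ∑ x ∈ Vp, ∑ y ∈ Vp, G1 x * G2 y * (x + y) := by
      apply Finset.sum_congr rfl; intro x hx
      apply Finset.sum_congr rfl; intro y _
      rw [qmr1, if_pos (Or.inl (hVpPos x hx))]; ring
    have q_pn : ∑ x ∈ Vp, ∑ y ∈ Vn, G1 x * G2 y * (qmr1 x y * (x + y))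
        = ∑ x ∈ Vp, ∑ y ∈ Vn, G1 x * G2 y * (x + y) := by
      apply Finset.sum_congr rfl; intro x hx
      apply Finset.sum_congr rfl; intro y _
      rw [qmr1, if_pos (Or.inl (hVpPos x hx))]; ring
    have q_np : ∑ x ∈ Vn, ∑ y ∈ Vp, G1 x * G2 y * (qmr1 x y * (x + y))
        = ∑ x ∈ Vn, ∑ y ∈ Vp, G1 x * G2 y * (x + y) := by
      apply Finset.sum_congr rfl; intro x _
      apply Finset.sum_congr rfl; intro y hy
      rw [qmr1, if_pos (Or.inr (hVpPos y hy))]; ring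
    have q_nn : ∑ x ∈ Vn, ∑ y ∈ Vn, G1 x * G2 y * (qmr1 x y * (x + y)) = 0 := by
      apply Finset.sum_eq_zero; intro x hx
      apply Finset.sum_eq_zero; intro y hy
      rw [qmr1, if_neg]
      · ring
      · rintro (h | h)
        · exact absurd h (not_lt.mpr (hVnNeg x hx).le)
        · exact absurd h (not_lt.mpr (hVnNeg y hy).le)
    rw [q_pp, q_pn, q_np, q_nn, region_sum, region_sum, region_sum]
    rw [← hg1p, ← hg1n, ← hg2p, ← hg2n, ← hP1, ← hN1, ← hP2, ← hN2]
    have e1 : g2n = 1 - g2p := by linarith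
    have e2 : g1n = 1 - g1p := by linarith
    rw [e1, e2]; ring
  have hW2 : welfare2 V G1 G2 qmr2 = g2p * P1 + g1p * P2 := by
    rw [welfare2, sum_split V hV0 (fun x => ∑ y ∈ V, G1 x * G2 y * (qmr2 x y * (x + y)))]
    have ei : ∀ x, ∑ y ∈ V, G1 x * G2 y * (qmr2 x y * (x + y))
        = ∑ y ∈ Vp, G1 x * G2 y * (qmr2 x y * (x + y))
          + ∑ y ∈ Vn, G1 x * G2 y * (qmr2 x y * (x + y)) :=
      fun x => sum_split V hV0 _
    rw [Finset.sum_congr rfl (fun x _ => ei x), Finset.sum_congr rfl (fun x _ => ei x),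
      Finset.sum_add_distrib, Finset.sum_add_distrib]
    have q_pp : ∑ x ∈ Vp, ∑ y ∈ Vp, G1 x * G2 y * (qmr2 x y * (x + y))
        = ∑ x ∈ Vp, ∑ y ∈ Vp, G1 x * G2 y * (x + y) := by
      apply Finset.sum_congr rfl; intro x hx
      apply Finset.sum_congr rfl; intro y hy
      rw [qmr2, if_pos ⟨hVpPos x hx, hVpPos y hy⟩]; ring
    have q_pn : ∑ x ∈ Vp, ∑ y ∈ Vn, G1 x * G2 y * (qmr2 x y * (x + y)) = 0 := by
      apply Finset.sum_eq_zero; intro x _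
      apply Finset.sum_eq_zero; intro y hy
      rw [qmr2, if_neg (fun h => absurd h.2 (not_lt.mpr (hVnNeg y hy).le))]; ring
    have q_np : ∑ x ∈ Vn, ∑ y ∈ Vp, G1 x * G2 y * (qmr2 x y * (x + y)) = 0 := by
      apply Finset.sum_eq_zero; intro x hx
      apply Finset.sum_eq_zero; intro y _
      rw [qmr2, if_neg (fun h => absurd h.1 (not_lt.mpr (hVnNeg x hx).le))]; ring
    have q_nn : ∑ x ∈ Vn, ∑ y ∈ Vn, G1 x * G2 y * (qmr2 x y * (x + y)) = 0 := by
      apply Finset.sum_eq_zero; intro x hx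
      apply Finset.sum_eq_zero; intro y _
      rw [qmr2, if_neg (fun h => absurd h.1 (not_lt.mpr (hVnNeg x hx).le))]; ring
    rw [q_pp, q_pn, q_np, q_nn, region_sum]
    rw [← hg1p, ← hg2p, ← hP1, ← hP2]
    ring
  -- the slack variable s
  set s := max 0 (max ((Ap - g2p) / g2n) ((Bp - g1p) / g1n)) with hsdef
  have hs0 : 0 ≤ s := le_max_left _ _
  have hs1 : s ≤ 1 := by
    apply max_le zero_le_one
    apply max_le
    · rw [div_le_one hg2n_pos]; linarith
    · rw [div_le_one hg1n_pos]; linarith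
  have hsa : Ap ≤ g2p + g2n * s := by
    have : (Ap - g2p) / g2n ≤ s := le_trans (le_max_left _ _) (le_max_right _ _)
    rw [div_le_iff₀ hg2n_pos] at this
    linarith
  have hsb : Bp ≤ g1p + g1n * s := by
    have : (Bp - g1p) / g1n ≤ s := le_trans (le_max_right _ _) (le_max_right _ _)
    rw [div_le_iff₀ hg1n_pos] at this
    linarith
  have hsAm : g2p * s ≤ Am := by
    have h : s ≤ Am / g2p := by
      apply max_le (div_nonneg hAm0 hg2p_pos.le)
      apply max_le
      · rw [div_le_div_iff₀ hg2n_pos hg2p_pos]; linarith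
      · rw [div_le_div_iff₀ hg1n_pos hg2p_pos]; linarith
    rw [le_div_iff₀ hg2p_pos] at h
    linarith
  have hsBm : g1p * s ≤ Bm := by
    have h : s ≤ Bm / g1p := by
      apply max_le (div_nonneg hBm0 hg1p_pos.le)
      apply max_le
      · rw [div_le_div_iff₀ hg2n_pos hg1p_pos]; linarith
      · rw [div_le_div_iff₀ hg1n_pos hg1p_pos]; linarith
    rw [le_div_iff₀ hg1p_pos] at h
    linarith
  -- combine
  have key : welfare2 V G1 G2 f
      ≤ (g2p * P1 + g1p * P2) + s * (g2n * P1 + g1n * P2 + g2p * N1 + g1p * N2) := by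
    rw [hWf]
    have t1 : P1 * Ap ≤ P1 * (g2p + g2n * s) := mul_le_mul_of_nonneg_left hsa hP1_nn
    have t2 : P2 * Bp ≤ P2 * (g1p + g1n * s) := mul_le_mul_of_nonneg_left hsb hP2_nn
    have t3 : N1 * Am ≤ N1 * (g2p * s) := mul_le_mul_of_nonpos_left hsAm hN1_np
    have t4 : N2 * Bm ≤ N2 * (g1p * s) := mul_le_mul_of_nonpos_left hsBm hN2_np
    linarith [t1, t2, t3, t4]
  have hdiff : welfare2 V G1 G2 qmr1 - welfare2 V G1 G2 qmr2
      = g2n * P1 + g1n * P2 + g2p * N1 + g1p * N2 := by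
    rw [hW1, hW2]
    have e1 : g2n = 1 - g2p := by linarith
    have e2 : g1n = 1 - g1p := by linarith
    rw [e1, e2]; ring
  rcases le_total (welfare2 V G1 G2 qmr1) (welfare2 V G1 G2 qmr2) with h | h
  · rw [max_eq_right h]
    have hd : g2n * P1 + g1n * P2 + g2p * N1 + g1p * N2 ≤ 0 := by
      rw [← hdiff]; linarith
    linarith [mul_nonneg hs0 (neg_nonneg.mpr hd), key, hW2]
  · rw [max_eq_left h]
    have hd : 0 ≤ g2n * P1 + g1n * P2 + g2p * N1 + g1p * N2 := by
      rw [← hdiff]; linarith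
    linarith [mul_le_of_le_one_left hd hs1, key, hW1, hW2]

/-- Theorem 1: with two agents, the maximal welfare over anonymous
BIC SCFs is attained by `f⁽¹⁾` or by `f⁽²⁾`. -/
theorem stmt10 (V : Finset ℝ) (hV0 : (0 : ℝ) ∉ V)
    (G1 G2 : ℝ → ℝ)
    (hG1 : (∀ x, 0 ≤ G1 x) ∧ ∑ x ∈ V, G1 x = 1)
    (hG2 : (∀ x, 0 ≤ G2 x) ∧ ∑ x ∈ V, G2 x = 1)
    (hm1 : (∃ x ∈ V, 0 < x ∧ 0 < G1 x) ∧ (∃ x ∈ V, x < 0 ∧ 0 < G1 x))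
    (hm2 : (∃ x ∈ V, 0 < x ∧ 0 < G2 x) ∧ (∃ x ∈ V, x < 0 ∧ 0 < G2 x)) :
    (∀ f : ℝ → ℝ → ℝ, (∀ x y, 0 ≤ f x y ∧ f x y ≤ 1) → (∀ x y, f x y = f y x) →
      BIC2 V G1 G2 f → welfare2 V G1 G2 f ≤ welfare2 V G1 G2 qmr1) ∨
    (∀ f : ℝ → ℝ → ℝ, (∀ x y, 0 ≤ f x y ∧ f x y ≤ 1) → (∀ x y, f x y = f y x) →
      BIC2 V G1 G2 f → welfare2 V G1 G2 f ≤ welfare2 V G1 G2 qmr2) := by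
  rcases le_total (welfare2 V G1 G2 qmr1) (welfare2 V G1 G2 qmr2) with h | h
  · exact Or.inr fun f h01 hsym hB =>
      (master V hV0 G1 G2 hG1 hG2 hm1 hm2 f h01 hsym hB).trans_eq (max_eq_right h)
  · exact Or.inl fun f h01 hsym hB =>
      (master V hV0 G1 G2 hG1 hG2 hm1 hm2 f h01 hsym hB).trans_eq (max_eq_left h)
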